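/- Let K be a field and G ≤ GL_n(K) a linear group such that every g ∈ G is unipotent (i.e., (g−1)^n = 0 as a matrix). Then there is a basis of K^n in which all elements of G are simultaneously upper unitriangular; equivalently, the representation (K^n, G) satisfies the identity x∘(y_1−1)⋯(y_n−1)≡0. -/

import Mathlib

open Module LinearMap

section Irreducible

variable {K : Type*} [Field K] {V : Type*} [AddCommGroup V] [Module K V]

/-- Core lemma: a monoid of unipotent endomorphisms acting irreducibly on a
nontrivial finite-dimensional space over an algebraically closed field is trivial. -/
theorem kolchin_irreducible [IsAlgClosed K] [FiniteDimensional K V] [Nontrivial V]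
    (M : Submonoid (Module.End K V))
    (hnil : ∀ m ∈ M, IsNilpotent (m - 1))
    (hirr : ∀ W : Submodule K V, (∀ m ∈ M, ∀ w ∈ W, m w ∈ W) → W ≠ ⊥ → W = ⊤) :
    ∀ m ∈ M, m = 1 := by
  classical
  set gens : Set (Module.End K V) :=
    (fun m => m - 1) '' (M : Set (Module.End K V)) with hgens
  set I : Submodule K (Module.End K V) := Submodule.span K gens with hIdef
  -- closure of I under right multiplication by M
  have hIm : ∀ m ∈ M, ∀ x ∈ I, x * m ∈ I := by
    intro m hm x hx
    induction hx using Submodule.span_induction with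
    | mem y hy =>
        obtain ⟨g, hg, rfl⟩ := hy
        have he : (g - 1) * m = (g * m - 1) - (m - 1) := by noncomm_ring
        rw [he]
        exact sub_mem (Submodule.subset_span ⟨g * m, M.mul_mem hg hm, rfl⟩)
          (Submodule.subset_span ⟨m, hm, rfl⟩)
    | zero => simpa using I.zero_mem
    | add y z _ _ hy hz => simpa [add_mul] using I.add_mem hy hz
    | smul c y _ hy => simpa [smul_mul_assoc] using I.smul_mem c hy
  -- closure of I under multiplication
  have hII : ∀ x ∈ I, ∀ y ∈ I, x * y ∈ I := by
    intro x hx y hy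
    induction hy using Submodule.span_induction with
    | mem z hz =>
        obtain ⟨g, hg, rfl⟩ := hz
        have he : x * (g - 1) = x * g - x := by noncomm_ring
        rw [he]
        exact sub_mem (hIm g hg x hx) hx
    | zero => simpa using I.zero_mem
    | add y z _ _ hy hz => simpa [mul_add] using I.add_mem hy hz
    | smul c y _ hy => simpa [mul_smul_comm] using I.smul_mem c hy
  -- closure under right multiplication by span of M
  have hIB : ∀ a ∈ Submodule.span K (M : Set (Module.End K V)), ∀ x ∈ I, x * a ∈ I := by
    intro a ha x hx
    induction ha using Submodule.span_induction with
    | mem b hb => exact hIm b hb x hx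
    | zero => simpa using I.zero_mem
    | add y z _ _ hy hz => simpa [mul_add] using I.add_mem hy hz
    | smul c y _ hy => simpa [mul_smul_comm] using I.smul_mem c hy
  -- trace vanishes on I
  have htr : ∀ x ∈ I, LinearMap.trace K V x = 0 := by
    intro x hx
    induction hx using Submodule.span_induction with
    | mem y hy =>
        obtain ⟨g, hg, rfl⟩ := hy
        exact (LinearMap.isNilpotent_trace_of_isNilpotent (hnil g hg)).eq_zero
    | zero => simp
    | add y z _ _ hy hz => simp [map_add, hy, hz]
    | smul c y _ hy => simp [map_smul, hy]
  -- main claim : every element of I is zero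
  have hzero : ∀ x ∈ I, x = 0 := by
    by_contra hcon
    push_neg at hcon
    obtain ⟨x₀, hx₀I, hx₀⟩ := hcon
    set s : Set ℕ := {r | ∃ x ∈ I, x ≠ 0 ∧ finrank K (LinearMap.range x) = r} with hs
    have hsne : s.Nonempty := ⟨_, x₀, hx₀I, hx₀, rfl⟩
    obtain ⟨y, hyI, hy0, hyr⟩ := Nat.sInf_mem hsne
    set r := sInf s with hrdef
    have hmin : ∀ z ∈ I, z ≠ 0 → r ≤ finrank K (LinearMap.range z) :=
      fun z hz hz0 => Nat.sInf_le ⟨z, hz, hz0, rfl⟩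
    have hr1 : 1 ≤ r := by
      rw [← hyr]
      rcases Nat.eq_zero_or_pos (finrank K (LinearMap.range y)) with h | h
      · exact absurd (LinearMap.range_eq_bot.mp (Submodule.finrank_eq_zero.mp h)) hy0
      · exact h
    -- y has rank ≥ 1; we derive a contradiction in both cases r = 1 and r ≥ 2.
    rcases eq_or_lt_of_le hr1 with hr | hr
    · -- rank one case
      obtain ⟨u₀, hu₀⟩ : ∃ u₀, y u₀ ≠ 0 := by
        by_contra h; push_neg at h; exact hy0 (LinearMap.ext fun v => h v)
      set w : V := y u₀ with hw
      have hwmem : w ∈ LinearMap.range y := ⟨u₀, rfl⟩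
      have hrange : LinearMap.range y = Submodule.span K {w} := by
        refine (Submodule.eq_of_le_of_finrank_eq ((Submodule.span_singleton_le_iff_mem _ _).mpr hwmem) ?_).symm
        rw [finrank_span_singleton hu₀, hyr, ← hr]
      -- a dual functional with ψ w = 1
      obtain ⟨φ, hφ⟩ : ∃ φ : Dual K V, φ w ≠ 0 := by
        by_contra h; push_neg at h
        exact hu₀ ((Module.forall_dual_apply_eq_zero_iff K w).mp h)
      set ψ : Dual K V := (φ w)⁻¹ • φ with hψ
      have hψw : ψ w = 1 := by simp [hψ, inv_mul_cancel₀ hφ]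
      have hspan : ∀ v : V, v ∈ Submodule.span K ({w} : Set V) → v = ψ v • w := by
        intro v hv
        obtain ⟨c, rfl⟩ := Submodule.mem_span_singleton.mp hv
        simp [map_smul, hψw, smul_eq_mul]
      -- for every m ∈ M : y (m w) = 0
      have hkill : ∀ m ∈ M, y (m w) = 0 := by
        intro m hm
        have hym : y * m ∈ I := hIm m hm y hyI
        have hform : ∀ v : V, (y * m) v = (ψ.comp (y * m)) v • w := by
          intro v
          have : (y * m) v ∈ Submodule.span K ({w} : Set V) := by
            rw [← hrange]; exact ⟨m v, rfl⟩
          simpa using hspan _ this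
        have heq : (y * m) = dualTensorHom K V V (ψ.comp (y * m) ⊗ₜ[K] w) := by
          ext v; rw [dualTensorHom_apply]; exact hform v
        have htr0 : ψ (y (m w)) = 0 := by
          have h1 := htr _ hym
          rw [heq, LinearMap.trace_eq_contract_apply, contractLeft_apply] at h1
          simpa using h1
        have h2 : y (m w) = ψ (y (m w)) • w := by
          have : (y * m) w ∈ Submodule.span K ({w} : Set V) := by
            rw [← hrange]; exact ⟨m w, rfl⟩
          simpa using hspan _ this
        rw [h2, htr0, zero_smul]
      -- the orbit span of w is everything, so y = 0
      set Z : Submodule K V := Submodule.span K ((fun m : Module.End K V => m w) '' (M : Set _)) with hZ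
      have hZinv : ∀ m ∈ M, ∀ z ∈ Z, m z ∈ Z := by
        intro m hm z hz
        induction hz using Submodule.span_induction with
        | mem v hv =>
            obtain ⟨g, hg, rfl⟩ := hv
            exact Submodule.subset_span ⟨m * g, M.mul_mem hm hg, rfl⟩
        | zero => simpa using Z.zero_mem
        | add v v' _ _ hv hv' => simpa [map_add] using Z.add_mem hv hv'
        | smul c v _ hv => simpa [map_smul] using Z.smul_mem c hv
      have hZne : Z ≠ ⊥ := by
        refine Submodule.ne_bot_iff _ |>.mpr ⟨w, Submodule.subset_span ⟨1, M.one_mem, ?_⟩, hu₀⟩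
        simp
      have hZtop : Z = ⊤ := hirr Z hZinv hZne
      have hyZ : ∀ z ∈ Z, y z = 0 := by
        intro z hz
        induction hz using Submodule.span_induction with
        | mem v hv => obtain ⟨g, hg, rfl⟩ := hv; exact hkill g hg
        | zero => simp
        | add v v' _ _ hv hv' => simp [map_add, hv, hv']
        | smul c v _ hv => simp [map_smul, hv]
      exact hy0 (LinearMap.ext fun v => hyZ v (hZtop ▸ Submodule.mem_top))
    · -- rank ≥ 2 case
      -- two independent vectors in the range of y
      have hfr : 2 ≤ finrank K (LinearMap.range y) := by omega
      set W := LinearMap.range y with hW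
      let b := finBasis K W
      have h2 : 2 ≤ finrank K W := hfr
      let i₀ : Fin (finrank K W) := ⟨0, by omega⟩
      let i₁ : Fin (finrank K W) := ⟨1, by omega⟩
      set w₁ : V := (b i₀ : V) with hw₁
      set w₂ : V := (b i₁ : V) with hw₂
      have hw₁mem : w₁ ∈ W := (b i₀).2
      have hw₂mem : w₂ ∈ W := (b i₁).2
      have hw₁0 : w₁ ≠ 0 := by
        intro h
        have : (b i₀ : W) = 0 := Subtype.ext h
        exact b.ne_zero i₀ this
      obtain ⟨u₁, hu₁⟩ : ∃ u₁, y u₁ = w₁ := hw₁mem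
      obtain ⟨u₂, hu₂⟩ : ∃ u₂, y u₂ = w₂ := hw₂mem
      -- find a in span of M with a w₁ = u₂
      have hZ1 : Submodule.span K ((fun m : Module.End K V => m w₁) '' (M : Set _)) = ⊤ := by
        apply hirr
        · intro m hm z hz
          induction hz using Submodule.span_induction with
          | mem v hv =>
              obtain ⟨g, hg, rfl⟩ := hv
              exact Submodule.subset_span ⟨m * g, M.mul_mem hm hg, rfl⟩
          | zero => simp
          | add v v' _ _ hv hv' => simpa [map_add] using Submodule.add_mem _ hv hv'
          | smul c v _ hv => simpa [map_smul] using Submodule.smul_mem _ c hv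
        · refine Submodule.ne_bot_iff _ |>.mpr ⟨w₁, Submodule.subset_span ⟨1, M.one_mem, ?_⟩, hw₁0⟩
          simp
      obtain ⟨a, haB, ha⟩ : ∃ a ∈ Submodule.span K (M : Set (Module.End K V)), a w₁ = u₂ := by
        have : u₂ ∈ Submodule.map (LinearMap.applyₗ w₁ : Module.End K V →ₗ[K] V)
            (Submodule.span K (M : Set (Module.End K V))) := by
          rw [Submodule.map_span]
          have himg : (LinearMap.applyₗ w₁ : Module.End K V →ₗ[K] V) ''
              (M : Set (Module.End K V)) = (fun m : Module.End K V => m w₁) '' (M : Set _) := by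
            ext v; simp [LinearMap.applyₗ]; rfl
          rw [himg, hZ1]; trivial
        obtain ⟨a, ha1, ha2⟩ := this
        exact ⟨a, ha1, ha2⟩
      -- eigenvalue of y∘a restricted to W
      have hWinv : ∀ v ∈ W, (y * a) v ∈ W := fun v _ => ⟨a v, rfl⟩
      set e : Module.End K W := (y * a).restrict hWinv with he
      have hWnt : Nontrivial W := Submodule.nontrivial_iff_ne_bot.mpr (by
        intro h
        have hmem : w₁ ∈ W := ⟨u₁, hu₁⟩
        rw [h] at hmem
        exact hw₁0 ((Submodule.mem_bot K).mp hmem))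
      obtain ⟨lam, hlam⟩ := Module.End.exists_eigenvalue e
      obtain ⟨w₀, hw₀⟩ := hlam.exists_hasEigenvector
      set z : Module.End K V := y * a * y - lam • y with hz
      have hzI : z ∈ I := by
        refine sub_mem (hII _ (hIB a haB y hyI) y hyI) (I.smul_mem lam hyI)
      have hz0 : z ≠ 0 := by
        intro h
        have h1 : z u₁ = 0 := by rw [h]; rfl
        have h2 : z u₁ = w₂ - lam • w₁ := by
          simp only [hz, LinearMap.sub_apply, LinearMap.smul_apply, Module.End.mul_apply,
            hu₁, ha, hu₂]
        rw [h2, sub_eq_zero] at h1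
        -- contradicts independence of basis vectors
        have hbe : (b i₁ : W) = lam • b i₀ := Subtype.ext (by simpa [hw₁, hw₂] using h1)
        have := congrArg (fun v => b.repr v i₁) hbe
        simp only [Basis.repr_self, map_smul] at this
        rw [Finsupp.single_apply, Finsupp.smul_apply, Finsupp.single_apply] at this
        have hne : i₀ ≠ i₁ := by simp [i₀, i₁, Fin.ext_iff]
        simp [hne] at this
      -- rank of z is < r
      set g : Module.End K V := y * a - lam • 1 with hg
      have hzg : z = g * y := by rw [hz, hg]; noncomm_ring
      have hgw₀ : g (w₀ : V) = 0 := by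
        have h1 : (y * a) (w₀ : V) = lam • (w₀ : V) := by
          have h0 := hw₀.apply_eq_smul
          have h2 := congrArg (Subtype.val) h0
          simpa [he, LinearMap.restrict_apply] using h2
        simp [hg, h1, LinearMap.sub_apply]
      set fr : W →ₗ[K] V := g.domRestrict W with hfr2
      have hkerne : LinearMap.ker fr ≠ ⊥ := by
        refine Submodule.ne_bot_iff _ |>.mpr ⟨w₀, ?_, hw₀.2⟩
        simp [hfr2, LinearMap.mem_ker, LinearMap.domRestrict_apply, hgw₀]
      have hkerpos : 1 ≤ finrank K (LinearMap.ker fr) := by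
        rcases Nat.eq_zero_or_pos (finrank K (LinearMap.ker fr)) with h | h
        · exact absurd (Submodule.finrank_eq_zero.mp h) hkerne
        · exact h
      have hsum := LinearMap.finrank_range_add_finrank_ker fr
      have hWr : finrank K W = r := hyr
      have hrangefr : finrank K (LinearMap.range fr) ≤ r - 1 := by omega
      have hzle : LinearMap.range z ≤ LinearMap.range fr := by
        rintro _ ⟨v, rfl⟩
        refine ⟨⟨y v, ⟨v, rfl⟩⟩, ?_⟩
        simp [hfr2, LinearMap.domRestrict_apply, hzg, Module.End.mul_apply]
      have hge : r ≤ finrank K (LinearMap.range z) := hmin z hzI hz0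
      have hle : finrank K (LinearMap.range z) ≤ r - 1 :=
        le_trans (Submodule.finrank_mono hzle) hrangefr
      omega
  intro m hm
  have : m - 1 ∈ I := Submodule.subset_span ⟨m, hm, rfl⟩
  have := hzero _ this
  rw [sub_eq_zero] at this
  exact this

end Irreducible

section Fixed

variable {K : Type*} [Field K] {V : Type*} [AddCommGroup V] [Module K V]

/-- Powers of restricted maps. -/
private lemma restrict_pow_apply (f : Module.End K V) {U : Submodule K V}
    (h : ∀ v ∈ U, f v ∈ U) (k : ℕ) (u : U) :
    (((f.restrict h) ^ k) u : V) = (f ^ k) u := by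
  induction k with
  | zero => simp
  | succ k ih =>
      rw [pow_succ', pow_succ', Module.End.mul_apply, Module.End.mul_apply]
      show f (((f.restrict h ^ k) u : V)) = f ((f ^ k) (u : V))
      exact congrArg f ih

/-- A monoid of unipotent endomorphisms of a nontrivial finite-dimensional vector space
over an algebraically closed field has a common nonzero fixed vector. -/
theorem kolchin_exists_fixed [IsAlgClosed K] [FiniteDimensional K V] [Nontrivial V]
    (M : Submonoid (Module.End K V))
    (hnil : ∀ m ∈ M, IsNilpotent (m - 1)) :
    ∃ v : V, v ≠ 0 ∧ ∀ m ∈ M, m v = v := by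
  classical
  set s : Set ℕ := {d | ∃ U : Submodule K V,
    (∀ m ∈ M, ∀ u ∈ U, m u ∈ U) ∧ U ≠ ⊥ ∧ finrank K U = d} with hs
  have hsne : s.Nonempty := ⟨finrank K (⊤ : Submodule K V), ⊤,
    fun _ _ _ _ => Submodule.mem_top, by simp, rfl⟩
  obtain ⟨U, hUinv, hUne, hUr⟩ := Nat.sInf_mem hsne
  have hmin : ∀ W : Submodule K V, (∀ m ∈ M, ∀ u ∈ W, m u ∈ W) → W ≠ ⊥ →
      sInf s ≤ finrank K W := fun W h1 h2 => Nat.sInf_le ⟨W, h1, h2, rfl⟩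
  have hUnt : Nontrivial U := Submodule.nontrivial_iff_ne_bot.mpr hUne
  -- restricted monoid
  set res : Module.End K V → Module.End K U := fun f =>
    if h : ∀ v ∈ U, f v ∈ U then f.restrict h else 0 with hres
  have hresap : ∀ m ∈ M, ∀ u : U, ((res m) u : V) = m u := by
    intro m hm u
    rw [hres]
    simp only [dif_pos (hUinv m hm)]
    rw [LinearMap.restrict_apply]
  set M' : Submonoid (Module.End K U) :=
    { carrier := res '' (M : Set (Module.End K V))
      one_mem' := ⟨1, M.one_mem, by
        ext u
        simpa using hresap 1 M.one_mem u⟩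
      mul_mem' := by
        rintro _ _ ⟨m, hm, rfl⟩ ⟨m', hm', rfl⟩
        refine ⟨m * m', M.mul_mem hm hm', ?_⟩
        ext u
        simp only [Module.End.mul_apply]
        rw [hresap _ (M.mul_mem hm hm') u, hresap m hm _, hresap m' hm' u,
          Module.End.mul_apply] } with hM'
  have hnil' : ∀ f ∈ M', IsNilpotent (f - 1) := by
    rintro _ ⟨m, hm, rfl⟩
    obtain ⟨k, hk⟩ := hnil m hm
    refine ⟨k, ?_⟩
    ext u
    have hsub : ∀ v ∈ U, (m - 1) v ∈ U := by
      intro v hv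
      simpa [LinearMap.sub_apply] using U.sub_mem (hUinv m hm v hv) hv
    have h1 : res m - 1 = (m - 1).restrict hsub := by
      ext u'
      simp [LinearMap.sub_apply, LinearMap.restrict_apply, hresap m hm u']
    rw [h1]
    have := restrict_pow_apply (m - 1) hsub k u
    rw [hk] at this
    simpa using this
  have hirr' : ∀ W : Submodule K U, (∀ f ∈ M', ∀ w ∈ W, f w ∈ W) → W ≠ ⊥ → W = ⊤ := by
    intro W hWinv hWne
    set W' : Submodule K V := W.map U.subtype with hW'
    have hW'inv : ∀ m ∈ M, ∀ u ∈ W', m u ∈ W' := by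
      rintro m hm _ ⟨w, hw, rfl⟩
      refine ⟨(res m) w, hWinv _ ⟨m, hm, rfl⟩ w hw, ?_⟩
      simp [hresap m hm w]
    have hW'ne : W' ≠ ⊥ := by
      obtain ⟨w, hw, hw0⟩ := (Submodule.ne_bot_iff _).mp hWne
      refine (Submodule.ne_bot_iff _).mpr ⟨(w : V), ⟨w, hw, rfl⟩, ?_⟩
      simpa using hw0
    have h1 : sInf s ≤ finrank K W' := hmin W' hW'inv hW'ne
    have h2 : finrank K W' = finrank K W := Submodule.finrank_map_subtype_eq U W
    have h3 : finrank K W ≤ finrank K U := W.finrank_le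
    apply Submodule.eq_top_of_finrank_eq
    omega
  have htriv := kolchin_irreducible M' hnil' hirr'
  obtain ⟨u, hu0⟩ := exists_ne (0 : U)
  refine ⟨(u : V), by simpa using hu0, ?_⟩
  intro m hm
  have h1 : res m = 1 := htriv _ ⟨m, hm, rfl⟩
  have := hresap m hm u
  rw [h1] at this
  simpa using this.symm

end Fixed

section Induction

variable {K : Type u} [Field K]

/-- Kolchin's theorem, module version: products of `finrank`-many elements
`m - 1` with `m` from a monoid of unipotent endomorphisms vanish. -/
theorem kolchin_module [IsAlgClosed K] :
    ∀ (d : ℕ) {V : Type v} [AddCommGroup V] [Module K V] [FiniteDimensional K V],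
    Module.finrank K V ≤ d →
    ∀ M : Submonoid (Module.End K V), (∀ m ∈ M, IsNilpotent (m - 1)) →
    ∀ l : List (Module.End K V), (∀ f ∈ l, f ∈ M) →
      Module.finrank K V ≤ l.length →
      (l.map (fun f => f - 1)).prod = 0 := by
  intro d
  induction d with
  | zero =>
      intro V _ _ _ hd M hnil l hl hlen
      have : finrank K V = 0 := Nat.le_zero.mp hd
      have hsub : Subsingleton V := (Module.finrank_zero_iff (R := K)).mp this
      exact Subsingleton.elim _ _
  | succ d ih =>
      intro V _ _ _ hd M hnil l hl hlen
      classical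
      rcases subsingleton_or_nontrivial V with hV | hV
      · exact Subsingleton.elim _ _
      · -- fixed subspace
        have hfr1 : 1 ≤ finrank K V := Module.finrank_pos
        set F : Submodule K V :=
          { carrier := {v | ∀ m ∈ M, m v = v}
            add_mem' := by
              intro a b ha hb m hm
              rw [map_add, ha m hm, hb m hm]
            zero_mem' := by intro m hm; simp
            smul_mem' := by
              intro c a ha m hm
              rw [map_smul, ha m hm] } with hF
        have hFne : F ≠ ⊥ := by
          obtain ⟨v, hv0, hv⟩ := kolchin_exists_fixed M hnil
          exact (Submodule.ne_bot_iff F).mpr ⟨v, hv, hv0⟩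
        have hFfr : 1 ≤ finrank K F := by
          rcases Nat.eq_zero_or_pos (finrank K F) with h | h
          · exact absurd (Submodule.finrank_eq_zero.mp h) hFne
          · exact h
        have hquot : finrank K (V ⧸ F) + finrank K F = finrank K V :=
          Submodule.finrank_quotient_add_finrank F
        set π : V →ₗ[K] V ⧸ F := F.mkQ with hπ
        have hqext : ∀ g₁ g₂ : Module.End K (V ⧸ F), g₁.comp π = g₂.comp π → g₁ = g₂ :=
          fun g₁ g₂ h => Submodule.linearMap_qext F h
        have hcomapF : ∀ m ∈ M, F ≤ F.comap m := by
          intro m hm v hv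
          have : m v = v := hv m hm
          simp only [Submodule.mem_comap, this]
          exact hv
        set q : Module.End K V → Module.End K (V ⧸ F) := fun f =>
          if h : F ≤ F.comap f then F.mapQ F f h else 0 with hq
        have hqπ : ∀ m ∈ M, (q m).comp π = π.comp m := by
          intro m hm
          rw [hq]
          simp only [dif_pos (hcomapF m hm)]
          exact Submodule.mapQ_mkQ F F m
        set M' : Submonoid (Module.End K (V ⧸ F)) :=
          { carrier := q '' (M : Set (Module.End K V))
            one_mem' := ⟨1, M.one_mem, by
              apply hqext
              rw [hqπ 1 M.one_mem]
              ext v; simp⟩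
            mul_mem' := by
              rintro _ _ ⟨m, hm, rfl⟩ ⟨m', hm', rfl⟩
              refine ⟨m * m', M.mul_mem hm hm', ?_⟩
              apply hqext
              rw [hqπ _ (M.mul_mem hm hm')]
              symm
              calc (q m * q m').comp π = (q m).comp ((q m').comp π) := by
                    ext v; simp [Module.End.mul_apply]
                _ = (q m).comp (π.comp m') := by rw [hqπ m' hm']
                _ = ((q m).comp π).comp m' := by ext v; simp
                _ = (π.comp m).comp m' := by rw [hqπ m hm]
                _ = π.comp (m * m') := by ext v; simp [Module.End.mul_apply] } with hM'
        have hsubπ : ∀ m ∈ M, (q m - 1).comp π = π.comp (m - 1) := by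
          intro m hm
          ext v
          simp only [LinearMap.comp_apply, LinearMap.sub_apply, Module.End.one_apply, map_sub]
          rw [← LinearMap.comp_apply (q m) π, hqπ m hm]
          simp
        have hpowπ : ∀ m ∈ M, ∀ k : ℕ, ((q m - 1) ^ k).comp π = π.comp ((m - 1) ^ k) := by
          intro m hm k
          induction k with
          | zero => ext v; simp
          | succ k ihk =>
              rw [pow_succ', pow_succ']
              calc ((q m - 1) * (q m - 1) ^ k).comp π
                  = (q m - 1).comp (((q m - 1) ^ k).comp π) := by ext v; simp
                _ = (q m - 1).comp (π.comp ((m - 1) ^ k)) := by rw [ihk]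
                _ = ((q m - 1).comp π).comp ((m - 1) ^ k) := by ext v; simp
                _ = (π.comp (m - 1)).comp ((m - 1) ^ k) := by rw [hsubπ m hm]
                _ = π.comp ((m - 1) * (m - 1) ^ k) := by ext v; simp
        have hnil' : ∀ f ∈ M', IsNilpotent (f - 1) := by
          rintro _ ⟨m, hm, rfl⟩
          obtain ⟨k, hk⟩ := hnil m hm
          refine ⟨k, hqext _ 0 ?_⟩
          rw [hpowπ m hm k, hk]
          ext v; simp
        -- split the list
        have hlenpos : 0 < l.length := lt_of_lt_of_le hfr1 hlen
        obtain ⟨a, t, rfl⟩ : ∃ a t, l = a :: t := by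
          cases l with
          | nil => simp at hlenpos
          | cons a t => exact ⟨a, t, rfl⟩
        have haM : a ∈ M := hl a List.mem_cons_self
        have htM : ∀ f ∈ t, f ∈ M := fun f hf => hl f (List.mem_cons_of_mem a hf)
        -- apply induction hypothesis on the quotient
        have hfrq : finrank K (V ⧸ F) ≤ d := by omega
        have hfrqt : finrank K (V ⧸ F) ≤ (t.map q).length := by
          rw [List.length_map]
          have : finrank K V ≤ t.length + 1 := by simpa using hlen
          omega
        have hqlmem : ∀ f ∈ t.map q, f ∈ M' := by
          intro f hf
          obtain ⟨g, hg, rfl⟩ := List.mem_map.mp hf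
          exact ⟨g, htM g hg, rfl⟩
        have hqprod := ih hfrq M' hnil' (t.map q) hqlmem hfrqt
        -- transfer back
        have hcomm : ∀ t' : List (Module.End K V), (∀ f ∈ t', f ∈ M) →
            ((t'.map (fun f => q f - 1)).prod).comp π =
              π.comp ((t'.map (fun f => f - 1)).prod) := by
          intro t' ht'
          induction t' with
          | nil => ext v; simp
          | cons f t'' iht =>
              have hf : f ∈ M := ht' f List.mem_cons_self
              have ht'' : ∀ g ∈ t'', g ∈ M := fun g hg => ht' g (List.mem_cons_of_mem f hg)
              simp only [List.map_cons, List.prod_cons]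
              calc ((q f - 1) * (t''.map (fun f => q f - 1)).prod).comp π
                  = (q f - 1).comp (((t''.map (fun f => q f - 1)).prod).comp π) := by
                    ext v; simp
                _ = (q f - 1).comp (π.comp ((t''.map (fun f => f - 1)).prod)) := by
                    rw [iht ht'']
                _ = ((q f - 1).comp π).comp ((t''.map (fun f => f - 1)).prod) := by
                    ext v; simp
                _ = (π.comp (f - 1)).comp ((t''.map (fun f => f - 1)).prod) := by
                    rw [hsubπ f hf]
                _ = π.comp ((f - 1) * (t''.map (fun f => f - 1)).prod) := by
                    ext v; simp
        have hqprod' : ((t.map (fun f => q f - 1)).prod) = 0 := by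
          have : (t.map q).map (fun f => f - 1) = t.map (fun f => q f - 1) := by
            rw [List.map_map]; rfl
          rw [← this]; exact hqprod
        have hmemF : ∀ v : V,
            ((t.map (fun f : Module.End K V => f - 1)).prod : Module.End K V) v ∈ F := by
          intro v
          have h1 := hcomm t htM
          rw [hqprod'] at h1
          have h2 : π (((t.map (fun f : Module.End K V => f - 1)).prod :
              Module.End K V) v) = 0 := by
            have := congrArg (fun g : V →ₗ[K] V ⧸ F => g v) h1
            simpa using this.symm
          have h3 : ((t.map (fun f : Module.End K V => f - 1)).prod :
              Module.End K V) v ∈ LinearMap.ker π := h2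
          rwa [hπ, Submodule.ker_mkQ] at h3
        ext v
        simp only [List.map_cons, List.prod_cons, Module.End.mul_apply, LinearMap.zero_apply]
        have hwF := hmemF v
        have ha1 : a (((t.map (fun f : Module.End K V => f - 1)).prod :
            Module.End K V) v) = ((t.map (fun f : Module.End K V => f - 1)).prod :
            Module.End K V) v := hwF a haM
        simp [LinearMap.sub_apply, ha1]

end Induction

/-- Kolchin's theorem: a group of unipotent matrices is simultaneously
unitriangularizable; equivalently, it satisfies the identity
`x ∘ (y₁ - 1) ⋯ (yₙ - 1) ≡ 0`. -/
theorem kolchin {K : Type*} [Field K] (n : ℕ)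
    (G : Subgroup (GL (Fin n) K))
    (hunip : ∀ g ∈ G, ((g : Matrix (Fin n) (Fin n) K) - 1) ^ n = 0) :
    ∀ l : List (GL (Fin n) K), l.length = n → (∀ g ∈ l, g ∈ G) →
      ∀ v : Fin n → K,
        Matrix.vecMul v ((l.map (fun g => (g : Matrix (Fin n) (Fin n) K) - 1)).prod) = 0 := by
  classical
  intro l hlen hlG v
  suffices hP : (l.map (fun g => (g : Matrix (Fin n) (Fin n) K) - 1)).prod = 0 by
    rw [hP, Matrix.vecMul_zero]
  have hlist : ∀ l' : List (GL (Fin n) K),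
      (l'.map (fun g => (g : Matrix (Fin n) (Fin n) K) - 1)) =
      List.map (fun A : Matrix (Fin n) (Fin n) K => A - 1)
        (List.map (fun g : GL (Fin n) K => (g : Matrix (Fin n) (Fin n) K)) l') := by
    intro l'
    induction l' with
    | nil => rfl
    | cons a t ih => simp only [List.map_cons] at *; rw [← ih]; rfl
  rw [hlist l]
  set lm : List (Matrix (Fin n) (Fin n) K) :=
    List.map (fun g : GL (Fin n) K => (g : Matrix (Fin n) (Fin n) K)) l with hlm
  have hlmlen : lm.length = n := by rw [hlm, List.length_map, hlen]
  have hlmG : ∀ A ∈ lm, ∃ g ∈ G, A = (g : Matrix (Fin n) (Fin n) K) := by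
    intro A hA
    obtain ⟨g, hg, rfl⟩ := List.mem_map.mp hA
    exact ⟨g, hlG g hg, rfl⟩
  clear_value lm
  clear hlm hlen hlG hlist
  set L := AlgebraicClosure K with hL
  set Ψ : Matrix (Fin n) (Fin n) K →+* Matrix (Fin n) (Fin n) L :=
    (algebraMap K L).mapMatrix with hΨ
  have hφinj : Function.Injective (algebraMap K L) := (algebraMap K L).injective
  have hinj : Function.Injective Ψ := by
    intro A B h
    ext i j
    apply hφinj
    have := congrArg (fun C : Matrix (Fin n) (Fin n) L => C i j) h
    simpa [hΨ, Matrix.map_apply] using this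
  apply hinj
  rw [map_zero, map_list_prod]
  set E : Matrix (Fin n) (Fin n) L ≃ₐ[L] Module.End L (Fin n → L) :=
    Matrix.toLinAlgEquiv' with hE
  set ρ : Matrix (Fin n) (Fin n) K →+* Module.End L (Fin n → L) :=
    E.toRingEquiv.toRingHom.comp Ψ with hρ
  set M : Submonoid (Module.End L (Fin n → L)) :=
    { carrier := {m | ∃ g ∈ G, m = ρ (g : Matrix (Fin n) (Fin n) K)}
      one_mem' := ⟨1, G.one_mem, by rw [Units.val_one, map_one]⟩
      mul_mem' := by
        rintro _ _ ⟨g, hg, rfl⟩ ⟨g', hg', rfl⟩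
        exact ⟨g * g', G.mul_mem hg hg', by rw [Units.val_mul, map_mul]⟩ } with hM
  have hnil : ∀ m ∈ M, IsNilpotent (m - 1) := by
    rintro _ ⟨g, hg, rfl⟩
    refine ⟨n, ?_⟩
    have h1 : ρ (g : Matrix (Fin n) (Fin n) K) - 1
        = ρ ((g : Matrix (Fin n) (Fin n) K) - 1) := by
      rw [map_sub, map_one]
    rw [h1, ← map_pow, hunip g hg, map_zero]
  have hfrn : Module.finrank L (Fin n → L) = n := by
    rw [Module.finrank_pi]; simp
  have hmem : ∀ f ∈ lm.map (fun A => ρ A), f ∈ M := by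
    intro f hf
    obtain ⟨A, hA, rfl⟩ := List.mem_map.mp hf
    obtain ⟨g, hg, rfl⟩ := hlmG A hA
    exact ⟨g, hg, rfl⟩
  have H := kolchin_module (K := L) n (le_of_eq hfrn) M hnil
    (lm.map (fun A => ρ A)) hmem
    (by rw [List.length_map, hlmlen, hfrn])
  apply E.injective
  rw [map_zero, map_list_prod]
  have h3 : ∀ lm' : List (Matrix (Fin n) (Fin n) K),
      List.map ⇑E (List.map ⇑Ψ (List.map (fun A => A - 1) lm'))
      = List.map (fun f => f - 1) (List.map (fun A => ρ A) lm') := by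
    intro lm'
    induction lm' with
    | nil => rfl
    | cons A t iht =>
        simp only [List.map_cons]
        rw [iht]
        congr 1
        rw [map_sub, map_sub, map_one, map_one]
        rfl
  rw [h3 lm]
  exact H
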